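/- Let T > 0 and define Λ_T(σ) := (4πT)^{−1/2} ∫_σ^∞ e^{−s²/(4T)}·(s−σ) ds for σ ≥ 0 and Λ_T(σ) := (4πT)^{−1/2} ∫_{−∞}^σ e^{−s²/(4T)}·(s−σ) ds for σ < 0. Then ∫_ℝ |Λ_T(σ)| dσ = T. -/

import Mathlib

open MeasureTheory Real

/-- The kernel `Λ_T` arising from the Gaussian average of the Duhamel term in
the Kannai transform of an inhomogeneous diffusion equation. -/
noncomputable def Lambda (T σ : ℝ) : ℝ :=
  if 0 ≤ σ then
    (Real.sqrt (4 * Real.pi * T))⁻¹ *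
      ∫ s in Set.Ioi σ, Real.exp (-s ^ 2 / (4 * T)) * (s - σ)
  else
    (Real.sqrt (4 * Real.pi * T))⁻¹ *
      ∫ s in Set.Iio σ, Real.exp (-s ^ 2 / (4 * T)) * (s - σ)

open Set Filter

section aux
variable {T : ℝ} (hT : 0 < T)

lemma exp_arg_eq (T s : ℝ) : -s ^ 2 / (4 * T) = -((4 * T)⁻¹) * s ^ 2 := by ring

include hT

lemma hb : (0:ℝ) < (4 * T)⁻¹ := by positivity

lemma gauss_integrable : Integrable (fun s : ℝ => Real.exp (-s ^ 2 / (4 * T))) := by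
  simp_rw [exp_arg_eq]
  exact integrable_exp_neg_mul_sq (hb hT)

lemma gauss_mul_integrable : Integrable (fun s : ℝ => Real.exp (-s ^ 2 / (4 * T)) * s) := by
  have h := integrable_mul_exp_neg_mul_sq (hb hT)
  have he : (fun s : ℝ => Real.exp (-s ^ 2 / (4 * T)) * s)
      = fun s : ℝ => s * Real.exp (-(4 * T)⁻¹ * s ^ 2) := by
    funext s; rw [exp_arg_eq]; ring
  rw [he]; exact h

lemma gauss_cont : Continuous (fun s : ℝ => Real.exp (-s ^ 2 / (4 * T))) := by fun_prop

lemma hasDerivAt_gauss (s : ℝ) :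
    HasDerivAt (fun s : ℝ => Real.exp (-s ^ 2 / (4 * T))) 
      (Real.exp (-s ^ 2 / (4 * T)) * (-(2 * s) / (4 * T))) s := by
  have h1 : HasDerivAt (fun s : ℝ => -s ^ 2 / (4 * T)) (-(2 * s) / (4 * T)) s := by
    have := ((hasDerivAt_pow 2 s).neg).div_const (4 * T)
    simpa using this
  exact h1.exp

lemma tendsto_gauss_zero : Tendsto (fun s : ℝ => Real.exp (-s ^ 2 / (4 * T))) atTop (nhds 0) := by
  apply Real.tendsto_exp_atBot.comp
  have h1 : Tendsto (fun s : ℝ => s ^ 2 / (4 * T)) atTop atTop :=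
    (tendsto_pow_atTop (two_ne_zero)).atTop_div_const (by positivity)
  simp_rw [neg_div]
  exact tendsto_neg_atBot_iff.mpr h1

lemma poly_gauss (n : ℕ) :
    Tendsto (fun x : ℝ => x ^ n * Real.exp (-x ^ 2 / (4 * T))) atTop (nhds 0) := by
  have h := (tendsto_rpow_abs_mul_exp_neg_mul_sq_cocompact (hb hT) n).mono_left
    _root_.atTop_le_cocompact
  refine h.congr' ?_
  filter_upwards [eventually_ge_atTop (0:ℝ)] with x hx
  rw [abs_of_nonneg hx, rpow_natCast, exp_arg_eq]

lemma integral_gauss_mul_Ioi (σ : ℝ) :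
    ∫ s in Set.Ioi σ, Real.exp (-s ^ 2 / (4 * T)) * s = 2 * T * Real.exp (-σ ^ 2 / (4 * T)) := by
  have hd : ∀ x ∈ Set.Ici σ,
      HasDerivAt (fun s : ℝ => -(2 * T) * Real.exp (-s ^ 2 / (4 * T)))
        (Real.exp (-x ^ 2 / (4 * T)) * x) x := by
    intro x _
    have := (hasDerivAt_gauss hT x).const_mul (-(2 * T))
    refine this.congr_deriv ?_
    field_simp
    ring
  have ht : Tendsto (fun s : ℝ => -(2 * T) * Real.exp (-s ^ 2 / (4 * T))) atTop (nhds 0) := by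
    have := (tendsto_gauss_zero hT).const_mul (-(2 * T))
    simpa using this
  have := integral_Ioi_of_hasDerivAt_of_tendsto' hd ((gauss_mul_integrable hT).integrableOn) ht
  rw [this]; ring

/-- tail Gaussian integral -/
noncomputable def Gg (T σ : ℝ) : ℝ := ∫ s in Set.Ioi σ, Real.exp (-s ^ 2 / (4 * T))

/-- the inner kernel integral for `σ ≥ 0` -/
noncomputable def Ff (T σ : ℝ) : ℝ := ∫ s in Set.Ioi σ, Real.exp (-s ^ 2 / (4 * T)) * (s - σ)

omit hT in
lemma Gg_nonneg (σ : ℝ) : 0 ≤ Gg T σ :=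
  setIntegral_nonneg measurableSet_Ioi fun s _ => (Real.exp_pos _).le

lemma Gg_zero : Gg T 0 = Real.sqrt (4 * Real.pi * T) / 2 := by
  have h : Gg T 0 = ∫ s in Set.Ioi (0:ℝ), Real.exp (-(4 * T)⁻¹ * s ^ 2) := by
    unfold Gg; simp_rw [exp_arg_eq]
  rw [h, integral_gaussian_Ioi]
  congr 2
  field_simp

lemma Ff_eq (σ : ℝ) :
    Ff T σ = 2 * T * Real.exp (-σ ^ 2 / (4 * T)) - σ * Gg T σ := by
  unfold Ff Gg
  have h : ∀ s : ℝ, Real.exp (-s ^ 2 / (4 * T)) * (s - σ)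
      = Real.exp (-s ^ 2 / (4 * T)) * s - σ * Real.exp (-s ^ 2 / (4 * T)) := by
    intro s; ring
  simp_rw [h]
  rw [integral_sub ((gauss_mul_integrable hT).integrableOn)
    (((gauss_integrable hT).integrableOn).const_mul σ), integral_gauss_mul_Ioi hT,
    integral_const_mul]

lemma Ff_nonneg (σ : ℝ) : 0 ≤ Ff T σ :=
  setIntegral_nonneg measurableSet_Ioi fun s hs =>
    mul_nonneg (Real.exp_pos _).le (by simp only [Set.mem_Ioi] at hs; linarith)

lemma Gg_eq (σ : ℝ) :
    Gg T σ = Gg T 0 - ∫ s in (0:ℝ)..σ, Real.exp (-s ^ 2 / (4 * T)) := by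
  have hint := gauss_integrable hT
  have h1 : (∫ s in Set.Iic σ, Real.exp (-s ^ 2 / (4 * T)))
      - ∫ s in Set.Iic (0:ℝ), Real.exp (-s ^ 2 / (4 * T))
      = ∫ s in (0:ℝ)..σ, Real.exp (-s ^ 2 / (4 * T)) :=
    intervalIntegral.integral_Iic_sub_Iic hint.integrableOn hint.integrableOn
  have h2 := intervalIntegral.integral_Iic_add_Ioi (b := σ) hint.integrableOn hint.integrableOn
  have h3 := intervalIntegral.integral_Iic_add_Ioi (b := (0:ℝ)) hint.integrableOn hint.integrableOn
  unfold Gg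
  linarith
  
lemma hasDerivAt_Gg (σ : ℝ) :
    HasDerivAt (Gg T) (-Real.exp (-σ ^ 2 / (4 * T))) σ := by
  have hG : Gg T = fun σ => Gg T 0 - ∫ s in (0:ℝ)..σ, Real.exp (-s ^ 2 / (4 * T)) :=
    funext fun σ => Gg_eq hT σ
  rw [hG]
  have hd : HasDerivAt (fun σ => ∫ s in (0:ℝ)..σ, Real.exp (-s ^ 2 / (4 * T)))
      (Real.exp (-σ ^ 2 / (4 * T))) σ :=
    intervalIntegral.integral_hasDerivAt_right ((gauss_integrable hT).intervalIntegrable)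
      ((gauss_cont hT).stronglyMeasurableAtFilter _ _) (gauss_cont hT).continuousAt
  exact ((hasDerivAt_const σ (Gg T 0)).sub hd).congr_deriv (by simp)

/-- the antiderivative -/
noncomputable def Phi (T σ : ℝ) : ℝ :=
  (σ ^ 2 / 2 + T) * Gg T σ - σ * T * Real.exp (-σ ^ 2 / (4 * T))

lemma hasDerivAt_Phi (σ : ℝ) : HasDerivAt (Phi T) (-Ff T σ) σ := by
  have h1 : HasDerivAt (fun σ : ℝ => σ ^ 2 / 2 + T) σ σ := by
    simpa using ((hasDerivAt_pow 2 σ).div_const 2).add_const T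
  have h2 := h1.mul (hasDerivAt_Gg hT σ)
  have h3 : HasDerivAt (fun σ : ℝ => σ * T) T σ := by simpa using (hasDerivAt_id σ).mul_const T
  have h4 := h3.mul (hasDerivAt_gauss hT σ)
  have h5 := h2.sub h4
  refine h5.congr_deriv ?_
  rw [Ff_eq hT σ]
  field_simp
  ring

lemma tendsto_Phi : Tendsto (Phi T) atTop (nhds 0) := by
  have hterm2 : Tendsto (fun σ : ℝ => σ * T * Real.exp (-σ ^ 2 / (4 * T))) atTop (nhds 0) := by
    have := (poly_gauss hT 1).const_mul T
    simp only [pow_one, mul_zero] at this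
    refine this.congr fun σ => by ring
  have hub : Tendsto (fun σ : ℝ => (σ ^ 2 / 2 + T) * (2 * T * Real.exp (-σ ^ 2 / (4 * T))))
      atTop (nhds 0) := by
    have h2 := (poly_gauss hT 2).const_mul T
    have h0 := (poly_gauss hT 0).const_mul (2 * T * T)
    simp only [mul_zero] at h2 h0
    have := h2.add h0
    rw [add_zero] at this
    refine this.congr fun σ => by ring
  have hterm1 : Tendsto (fun σ : ℝ => (σ ^ 2 / 2 + T) * Gg T σ) atTop (nhds 0) := by
    refine tendsto_of_tendsto_of_tendsto_of_le_of_le' tendsto_const_nhds hub ?_ ?_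
    · filter_upwards [eventually_ge_atTop (0:ℝ)] with σ hσ
      exact mul_nonneg (by positivity) (Gg_nonneg σ)
    · filter_upwards [eventually_ge_atTop (1:ℝ)] with σ hσ
      have hGle : Gg T σ ≤ 2 * T * Real.exp (-σ ^ 2 / (4 * T)) := by
        rw [← integral_gauss_mul_Ioi hT σ]
        refine setIntegral_mono_on ((gauss_integrable hT).integrableOn)
          ((gauss_mul_integrable hT).integrableOn) measurableSet_Ioi fun s hs => ?_
        simp only [Set.mem_Ioi] at hs
        nlinarith [Real.exp_pos (-s ^ 2 / (4 * T))]
      exact mul_le_mul_of_nonneg_left hGle (by positivity)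
  have := hterm1.sub hterm2
  rw [sub_zero] at this
  exact this

lemma integral_Ff : ∫ σ in Set.Ioi (0:ℝ), Ff T σ = T * Real.sqrt (4 * Real.pi * T) / 2 := by
  have hd : ∀ σ ∈ Set.Ici (0:ℝ), HasDerivAt (fun σ => -Phi T σ) (Ff T σ) σ := fun σ _ => by
    exact (hasDerivAt_Phi hT σ).neg.congr_deriv (neg_neg _)
  have ht : Tendsto (fun σ => -Phi T σ) atTop (nhds 0) := by
    simpa using (tendsto_Phi hT).neg
  have h := integral_Ioi_of_hasDerivAt_of_nonneg' hd (fun σ _ => Ff_nonneg hT σ) ht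
  rw [h]
  simp [Phi, Gg_zero hT]
  ring

lemma integrableOn_Ff : IntegrableOn (Ff T) (Set.Ioi (0:ℝ)) := by
  have hd : ∀ σ ∈ Set.Ici (0:ℝ), HasDerivAt (fun σ => -Phi T σ) (Ff T σ) σ := fun σ _ => by
    exact (hasDerivAt_Phi hT σ).neg.congr_deriv (neg_neg _)
  have ht : Tendsto (fun σ => -Phi T σ) atTop (nhds 0) := by
    simpa using (tendsto_Phi hT).neg
  exact integrableOn_Ioi_deriv_of_nonneg' hd (fun σ _ => Ff_nonneg hT σ) ht

end aux

lemma Lambda_neg {T : ℝ} (hT : 0 < T) {x : ℝ} (hx : 0 < x) : Lambda T (-x) = -Lambda T x := by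
  have hneg : ¬(0 ≤ -x) := by linarith
  simp only [Lambda, if_neg hneg, if_pos hx.le]
  have h2 : (∫ s in Set.Iio (-x), Real.exp (-s ^ 2 / (4 * T)) * (s - -x))
      = ∫ s in Set.Ioi x, Real.exp (-s ^ 2 / (4 * T)) * (-s - -x) := by
    rw [setIntegral_congr_set Iio_ae_eq_Iic, ← integral_comp_neg_Ioi]
    refine setIntegral_congr_fun measurableSet_Ioi fun s _ => ?_
    simp [neg_sq]
  have h3 : (∫ s in Set.Ioi x, Real.exp (-s ^ 2 / (4 * T)) * (-s - -x))
      = -∫ s in Set.Ioi x, Real.exp (-s ^ 2 / (4 * T)) * (s - x) := by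
    rw [← integral_neg]
    refine setIntegral_congr_fun measurableSet_Ioi fun s _ => ?_
    ring
  rw [h2, h3]
  ring


/-- The `L¹`-norm of the kernel `Λ_T` equals `T`. -/
theorem lambda_L1_norm (T : ℝ) (hT : 0 < T) :
    ∫ σ : ℝ, |Lambda T σ| = T := by
  set c := (Real.sqrt (4 * Real.pi * T))⁻¹ with hc
  have hsq : 0 < Real.sqrt (4 * Real.pi * T) := Real.sqrt_pos.mpr (by positivity)
  have hLpos : ∀ σ : ℝ, 0 ≤ σ → Lambda T σ = c * Ff T σ := fun σ hσ => by
    simp only [Lambda, Ff, if_pos hσ, hc]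
  have hIoi_int : IntegrableOn (Lambda T) (Set.Ioi 0) := by
    exact IntegrableOn.congr_fun ((integrableOn_Ff hT).const_mul c)
      (fun σ hσ => (hLpos σ (le_of_lt hσ)).symm) measurableSet_Ioi
  have habs_int : IntegrableOn (fun σ => |Lambda T σ|) (Set.Ioi 0) := hIoi_int.abs
  have hIoi_val : ∫ σ in Set.Ioi (0:ℝ), |Lambda T σ| = T / 2 := by
    have h1 : (∫ σ in Set.Ioi (0:ℝ), |Lambda T σ|) = ∫ σ in Set.Ioi (0:ℝ), c * Ff T σ :=
      setIntegral_congr_fun measurableSet_Ioi fun σ hσ => by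
        rw [hLpos σ (le_of_lt hσ),
          abs_of_nonneg (mul_nonneg (inv_nonneg.mpr hsq.le) (Ff_nonneg hT σ))]
    rw [h1, integral_const_mul, integral_Ff hT, hc]
    field_simp
  have hodd : ∀ σ ∈ Set.Ioi (0:ℝ), |Lambda T (-σ)| = |Lambda T σ| := fun σ hσ => by
    rw [Lambda_neg hT hσ, abs_neg]
  have hneg_int : IntegrableOn (fun σ => |Lambda T σ|) (Set.Iic 0) := by
    rw [← (Measure.measurePreserving_neg (volume : Measure ℝ)).integrableOn_comp_preimage
      (Homeomorph.neg ℝ).measurableEmbedding]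
    simp only [Function.comp_def, Set.neg_preimage, Set.neg_Iic, neg_zero]
    rw [integrableOn_Ici_iff_integrableOn_Ioi]
    exact IntegrableOn.congr_fun habs_int (fun σ hσ => (hodd σ hσ).symm) measurableSet_Ioi
  have hIic_val : ∫ σ in Set.Iic (0:ℝ), |Lambda T σ| = T / 2 := by
    have h := integral_comp_neg_Ioi (0:ℝ) fun σ => |Lambda T σ|
    rw [neg_zero] at h
    rw [← h, setIntegral_congr_fun measurableSet_Ioi hodd, hIoi_val]
  have htot := intervalIntegral.integral_Iic_add_Ioi hneg_int habs_int
  rw [← htot, hIic_val, hIoi_val]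
  ring
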